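/- For any modulus function f, the space X(f) = { (x_k) : Σ_{k=1}^∞ f(|x_k|) < ∞ } is contained in ℓ¹, i.e., every sequence with Σ f(|x_k|) < ∞ is absolutely summable. -/
import Mathlib


open Filter

/-- A modulus function `f : [0,∞) → [0,∞)`. -/
structure IsModulus (f : ℝ → ℝ) : Prop where
  nonneg : ∀ x, 0 ≤ x → 0 ≤ f x
  eq_zero_iff : ∀ x, 0 ≤ x → (f x = 0 ↔ x = 0)
  subadd : ∀ x y, 0 ≤ x → 0 ≤ y → f (x + y) ≤ f x + f y
  mono : ∀ x y, 0 ≤ x → x ≤ y → f x ≤ f y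
  right_cont : ContinuousWithinAt f (Set.Ici 0) 0

/-- Membership in `AC_θ(f)` with witness integer `n`. -/
def ACthetaF (f : ℝ → ℝ) (k : ℕ → ℕ) (n : ℕ) (x : ℕ → ℝ) : Prop :=
  Filter.Tendsto (fun r => (1 / ((k (r + 1) - k r : ℕ) : ℝ)) *
    ∑ m ∈ Finset.Ioc (k r) (k (r + 1)), f |x m - x (Nat.gcd m n)|)
    Filter.atTop (nhds 0)

lemma modulus_nsmul (f : ℝ → ℝ) (hf : IsModulus f) (t : ℝ) (ht : 0 ≤ t) :
    ∀ n : ℕ, f (n * t) ≤ n * f t := by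
  intro n
  induction n with
  | zero =>
    simp [(hf.eq_zero_iff 0 le_rfl).mpr rfl]
  | succ n ih =>
    have : ((n : ℝ) + 1) * t = n * t + t := by ring
    push_cast
    rw [this]
    calc f (n * t + t) ≤ f (n * t) + f t :=
          hf.subadd _ _ (by positivity) ht
      _ ≤ n * f t + f t := by linarith
      _ = ((n : ℝ) + 1) * f t := by ring

/-- Key pointwise bound: for `0 ≤ t ≤ 1`, `t * f 1 ≤ 2 * f t`. -/
lemma modulus_key (f : ℝ → ℝ) (hf : IsModulus f) (t : ℝ) (ht0 : 0 ≤ t) (ht1 : t ≤ 1) :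
    t * f 1 ≤ 2 * f t := by
  rcases eq_or_lt_of_le ht0 with h | h
  · simp [← h, (hf.eq_zero_iff 0 le_rfl).mpr rfl]
  · set n : ℕ := ⌈1 / t⌉₊ with hn
    have hinv : (1 : ℝ) ≤ 1 / t := by
      rw [le_div_iff₀ h]; linarith
    have hle : (1 : ℝ) ≤ n * t := by
      rw [← div_le_iff₀ h] at *
      calc (1 : ℝ) / t ≤ ⌈1 / t⌉₊ := Nat.le_ceil _
        _ = n := rfl
    have hn2 : (n : ℝ) ≤ 2 / t := by
      have : (n : ℝ) ≤ 1 / t + 1 := le_of_lt (Nat.ceil_lt_add_one (by linarith))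
      have h1t : 1 ≤ 1 / t := hinv
      rw [le_div_iff₀ h]
      calc (n : ℝ) * t ≤ (1 / t + 1) * t := by nlinarith
        _ = 1 + t := by field_simp
        _ ≤ 2 := by linarith
    have h1 : f 1 ≤ f (n * t) := hf.mono 1 (n * t) zero_le_one hle
    have h2 : f (n * t) ≤ n * f t := modulus_nsmul f hf t ht0 n
    have hft : 0 ≤ f t := hf.nonneg t ht0
    have : f 1 ≤ (2 / t) * f t := le_trans h1 (le_trans h2 (mul_le_mul_of_nonneg_right hn2 hft))
    calc t * f 1 ≤ t * ((2 / t) * f t) := by nlinarith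
      _ = 2 * f t := by field_simp

/-- `X(f) ⊆ ℓ¹` for any modulus `f`. -/
theorem Xf_subset_l1 (f : ℝ → ℝ) (hf : IsModulus f) (x : ℕ → ℝ)
    (hx : Summable (fun k => f |x k|)) :
    Summable (fun k => |x k|) := by
  have hf1 : 0 < f 1 := by
    rcases lt_or_eq_of_le (hf.nonneg 1 zero_le_one) with h | h
    · exact h
    · exfalso
      have := (hf.eq_zero_iff 1 zero_le_one).mp h.symm
      norm_num at this
  -- eventually |x k| ≤ 1
  have htend : Tendsto (fun k => f |x k|) atTop (nhds 0) := hx.tendsto_atTop_zero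
  have hev : ∀ᶠ k in atTop, |x k| ≤ 1 := by
    filter_upwards [htend.eventually (gt_mem_nhds hf1)] with k hk
    by_contra hc
    push_neg at hc
    exact absurd (hf.mono 1 |x k| zero_le_one hc.le) (by linarith)
  obtain ⟨N, hN⟩ := eventually_atTop.mp hev
  rw [← summable_nat_add_iff N]
  have hx' : Summable (fun k => (2 / f 1) * f |x (k + N)|) :=
    (((summable_nat_add_iff N).mpr hx).mul_left _)
  refine hx'.of_nonneg_of_le (fun k => abs_nonneg _) (fun k => ?_)
  have h1 : |x (k + N)| ≤ 1 := hN (k + N) (Nat.le_add_left _ _)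
  have := modulus_key f hf |x (k + N)| (abs_nonneg _) h1
  rw [div_mul_eq_mul_div, le_div_iff₀ hf1]
  linarith
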